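/- Let p : 𝒟 ⥤ 𝒞 be a comorphism of sites from (𝒟,K) to (𝒞,J) such that 𝒟 has finite limits and p preserves finite limits. Then a morphism f : d' ⟶ d of 𝒟 is K-locally cartesian if and only if there exists a family of morphisms (u_i : d_i ⟶ d)_{i∈I} generating a K-covering sieve on d such that for every i, the pullback projection of f along u_i (i.e., the morphism d' ×_d d_i ⟶ d_i) is K-locally cartesian. -/

import Mathlib

open CategoryTheory Limits

/-- A morphism `f : d' ⟶ d` is `K`-locally cartesian for `p : 𝒟 ⥤ 𝒞`. -/
def LocallyCartesian {D : Type*} [Category D] {C : Type*} [Category C]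
    (K : GrothendieckTopology D) (p : D ⥤ C) {d' d : D} (f : d' ⟶ d) : Prop :=
  (∀ (d'' : D) (g : d'' ⟶ d) (h : p.obj d'' ⟶ p.obj d'),
      h ≫ p.map f = p.map g →
      ∃ S : Sieve d'', S ∈ K d'' ∧
        ∀ {e : D} (v : e ⟶ d''), S.arrows v →
          ∃ hv : e ⟶ d', p.map v ≫ h = p.map hv ∧ hv ≫ f = v ≫ g) ∧
  (∀ (d'' : D) (h h' : d'' ⟶ d'), h ≫ f = h' ≫ f → p.map h = p.map h' →
      ∃ S : Sieve d'', S ∈ K d'' ∧ ∀ {e : D} (v : e ⟶ d''), S.arrows v → v ≫ h = v ≫ h')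

/-- A functor `p : (𝒟, K) ⥤ (𝒞, J)` is a comorphism of sites. -/
def IsComorphismOfSites {D : Type*} [Category D] {C : Type*} [Category C] (p : D ⥤ C)
    (K : GrothendieckTopology D) (J : GrothendieckTopology C) : Prop :=
  ∀ (d : D) (S : Sieve (p.obj d)), S ∈ J (p.obj d) → S.functorPullback p ∈ K d

section Aux

variable {D : Type*} [Category D] {C : Type*} [Category C]
    (K : GrothendieckTopology D) (p : D ⥤ C)
    [HasFiniteLimits D] [PreservesFiniteLimits p]

/-- Local cartesianness is stable under pullback. -/
lemma locallyCartesian_pullback {d' d e : D} (f : d' ⟶ d) (u : e ⟶ d)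
    (hf : LocallyCartesian K p f) :
    LocallyCartesian K p (pullback.snd f u) := by
  have hL := isLimitOfHasPullbackOfPreservesLimit p f u
  constructor
  · intro d'' g h hcomm
    obtain ⟨S, hS, hlift⟩ := hf.1 d'' (g ≫ u) (h ≫ p.map (pullback.fst f u)) (by
      rw [Category.assoc, ← p.map_comp, pullback.condition, p.map_comp,
        ← Category.assoc, hcomm, ← p.map_comp])
    refine ⟨S, hS, fun {e'} v hv => ?_⟩
    obtain ⟨hv', h1, h2⟩ := hlift v hv
    refine ⟨pullback.lift hv' (v ≫ g) (by rw [h2, Category.assoc]), ?_, pullback.lift_snd _ _ _⟩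
    apply PullbackCone.IsLimit.hom_ext hL
    · simp only [PullbackCone.mk_fst]
      erw [Category.assoc, h1, ← p.map_comp, pullback.lift_fst]
    · simp only [PullbackCone.mk_snd]
      erw [Category.assoc, hcomm, ← p.map_comp, ← p.map_comp, pullback.lift_snd]
  · intro d'' h h' he hp'
    obtain ⟨S, hS, heq⟩ := hf.2 d'' (h ≫ pullback.fst f u) (h' ≫ pullback.fst f u)
      (by rw [Category.assoc, pullback.condition, Category.assoc, pullback.condition,
        ← Category.assoc, he, Category.assoc])
      (by rw [p.map_comp, p.map_comp, hp'])
    refine ⟨S, hS, fun {e'} v hv => ?_⟩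
    have h3 := heq v hv
    apply pullback.hom_ext
    · simpa using h3
    · rw [Category.assoc, Category.assoc, he]

lemma locallyCartesian_of_family {d' d : D} (f : d' ⟶ d) {ι : Type*}
    (di : ι → D) (u : ∀ i, di i ⟶ d)
    (hu : Sieve.generate (Presieve.ofArrows di u) ∈ K d)
    (hcart : ∀ i, LocallyCartesian K p (pullback.snd f (u i))) :
    LocallyCartesian K p f := by
  constructor
  · intro d'' g h hcomm
    let R : Sieve d'' :=
      { arrows := fun e v => ∃ hv : e ⟶ d', p.map v ≫ h = p.map hv ∧ hv ≫ f = v ≫ g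
        downward_closed := by
          rintro e e' v ⟨hv, h1, h2⟩ w
          exact ⟨w ≫ hv, by rw [p.map_comp, Category.assoc, h1, p.map_comp],
            by rw [Category.assoc, h2, Category.assoc]⟩ }
    refine ⟨R, ?_, fun {e} v hv => hv⟩
    refine K.transitive (K.pullback_stable g hu) R ?_
    rintro e v ⟨e₁, l, m, hm, hvg⟩
    obtain ⟨i⟩ := hm
    have hL := isLimitOfHasPullbackOfPreservesLimit p f (u i)
    have hw : (p.map v ≫ h) ≫ p.map f = p.map l ≫ p.map (u i) := by
      rw [Category.assoc, hcomm, ← p.map_comp, ← hvg, p.map_comp]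
    set t := PullbackCone.IsLimit.lift hL (p.map v ≫ h) (p.map l) hw with ht
    have hfst : t ≫ p.map (pullback.fst f (u i)) = p.map v ≫ h :=
      PullbackCone.IsLimit.lift_fst hL _ _ hw
    have hsnd : t ≫ p.map (pullback.snd f (u i)) = p.map l :=
      PullbackCone.IsLimit.lift_snd hL _ _ hw
    obtain ⟨S, hS, hlift⟩ := (hcart i).1 e l t hsnd
    refine K.superset_covering ?_ hS
    rintro e' w hw'
    obtain ⟨k, h1, h2⟩ := hlift w hw'
    refine ⟨k ≫ pullback.fst f (u i), ?_, ?_⟩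
    · rw [p.map_comp, p.map_comp, Category.assoc, ← hfst]
      erw [← Category.assoc, h1]
      rfl
    · rw [Category.assoc, pullback.condition, ← Category.assoc, h2,
        Category.assoc, hvg, ← Category.assoc]
  · intro d'' h h' he hp'
    let R : Sieve d'' :=
      { arrows := fun e v => v ≫ h = v ≫ h'
        downward_closed := by
          intro e e' v hv w
          rw [Category.assoc, Category.assoc, hv] }
    refine ⟨R, ?_, fun {e} v hv => hv⟩
    refine K.transitive (K.pullback_stable (h ≫ f) hu) R ?_
    rintro e v ⟨e₁, l, m, hm, hvg⟩
    obtain ⟨i⟩ := hm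
    have hL := isLimitOfHasPullbackOfPreservesLimit p f (u i)
    have hc1 : (v ≫ h) ≫ f = l ≫ u i := by rw [Category.assoc, ← hvg]
    have hc2 : (v ≫ h') ≫ f = l ≫ u i := by
      rw [Category.assoc, ← he, ← Category.assoc, hc1]
    obtain ⟨S, hS, heq⟩ := (hcart i).2 e
      (pullback.lift (v ≫ h) l hc1) (pullback.lift (v ≫ h') l hc2)
      (by rw [pullback.lift_snd, pullback.lift_snd])
      (by
        apply PullbackCone.IsLimit.hom_ext hL
        · simp only [PullbackCone.mk_fst]
          erw [← p.map_comp, ← p.map_comp, pullback.lift_fst, pullback.lift_fst,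
            p.map_comp, p.map_comp, hp']
        · simp only [PullbackCone.mk_snd]
          erw [← p.map_comp, ← p.map_comp, pullback.lift_snd, pullback.lift_snd])
    refine K.superset_covering ?_ hS
    intro e' w hw'
    have h3 := heq w hw'
    have : (w ≫ pullback.lift (v ≫ h) l hc1) ≫ pullback.fst f (u i)
        = (w ≫ pullback.lift (v ≫ h') l hc2) ≫ pullback.fst f (u i) := by rw [h3]
    rw [Category.assoc, Category.assoc, pullback.lift_fst, pullback.lift_fst] at this
    simpa [R] using this

end Aux

/-- For a finite-limit-preserving comorphism of sites `p : (𝒟,K) ⟶ (𝒞,J)` with `𝒟` having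
finite limits, a morphism is `K`-locally cartesian iff its pullbacks along some `K`-covering
family are `K`-locally cartesian. -/
theorem locallyCartesian_iff_K_cartesian
    {D : Type*} [Category D] {C : Type*} [Category C] (p : D ⥤ C)
    (K : GrothendieckTopology D) (J : GrothendieckTopology C)
    (hp : IsComorphismOfSites p K J)
    [HasFiniteLimits D] [PreservesFiniteLimits p]
    {d' d : D} (f : d' ⟶ d) :
    LocallyCartesian K p f ↔
      ∃ (ι : Type*) (di : ι → D) (u : ∀ i, di i ⟶ d),
        Sieve.generate (Presieve.ofArrows di u) ∈ K d ∧
          ∀ i, LocallyCartesian K p (pullback.snd f (u i)) := by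
  constructor
  · intro hf
    refine ⟨PUnit, fun _ => d, fun _ => 𝟙 d, ?_, fun _ => ?_⟩
    · have : Sieve.generate (Presieve.ofArrows (fun _ : PUnit => d) fun _ => 𝟙 d) = ⊤ := by
        rw [← Sieve.id_mem_iff_eq_top]
        exact ⟨d, 𝟙 d, 𝟙 d, ⟨PUnit.unit⟩, by simp⟩
      rw [this]
      exact K.top_mem d
    · exact locallyCartesian_pullback K p f (𝟙 d) hf
  · rintro ⟨ι, di, u, hu, hcart⟩
    exact locallyCartesian_of_family K p f di u hu hcart
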